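/- Assume Graf's addition theorem e^{iℓ₁γ₁}J_{ℓ₁}(λρ₁) = Σ_{m∈ℤ} J_m(λρ₂) J_{m+ℓ₁}(λρ₃) e^{imγ₃} holds, where γ₁, γ₃ are the triangle angles as functions of γ₃ with ρ₁ = ρ₁(γ₃) = √(ρ₂²+ρ₃²-2ρ₂ρ₃cos γ₃). Then for all integers ℓ₁, ℓ₂ and λ > 0: ∫₀^π cos(ℓ₁γ₁ - ℓ₂γ₃) J_{ℓ₁}(λρ₁(γ₃)) dγ₃ = π J_{ℓ₂}(λρ₂) J_{ℓ₁+ℓ₂}(λρ₃). -/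

import Mathlib

open Real MeasureTheory Filter Topology Complex

/-- Bessel function of the first kind of integer order, via the standard
integral representation `J_n(x) = (1/π) ∫₀^π cos (n θ - x sin θ) dθ`. -/
noncomputable def besselJ (n : ℤ) (x : ℝ) : ℝ :=
  (1 / Real.pi) * ∫ θ in (0:ℝ)..Real.pi, Real.cos (n * θ - x * Real.sin θ)

private lemma re_aux (c θ : ℝ) :
    ((c:ℂ) * Complex.exp ((θ:ℂ) * Complex.I)).re = c * Real.cos θ := by
  simp [Complex.mul_re, Complex.exp_ofReal_mul_I_re]

theorem stmt_6 (ρ₂ ρ₃ lam : ℝ) (ρ₁ γ₁ : ℝ → ℝ) (ℓ₁ ℓ₂ : ℤ)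
    (h₂ : 0 < ρ₂) (h₃ : 0 < ρ₃) (hlam : 0 < lam)
    (hρ₁ : ∀ γ₃ ∈ Set.Ioo (0:ℝ) Real.pi,
      ρ₁ γ₃ = Real.sqrt (ρ₂ ^ 2 + ρ₃ ^ 2 - 2 * ρ₂ * ρ₃ * Real.cos γ₃))
    (hγ₁ : ∀ γ₃ ∈ Set.Ioo (0:ℝ) Real.pi,
      γ₁ γ₃ ∈ Set.Ioo (0:ℝ) Real.pi ∧
        Real.cos (γ₁ γ₃) =
          ((ρ₁ γ₃) ^ 2 + ρ₂ ^ 2 - ρ₃ ^ 2) / (2 * ρ₁ γ₃ * ρ₂))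
    (hGraf : ∀ γ₃ ∈ Set.Ioo (0:ℝ) Real.pi, ∀ ℓ : ℤ,
      HasSum
        (fun m : ℤ =>
          (besselJ m (lam * ρ₂) : ℂ) * (besselJ (m + ℓ) (lam * ρ₃) : ℂ) *
            Complex.exp (Complex.I * m * γ₃))
        (Complex.exp (Complex.I * ℓ * γ₁ γ₃) * (besselJ ℓ (lam * ρ₁ γ₃) : ℂ))) :
    (∫ γ₃ in (0:ℝ)..Real.pi,
        Real.cos (ℓ₁ * γ₁ γ₃ - ℓ₂ * γ₃) * besselJ ℓ₁ (lam * ρ₁ γ₃)) =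
      Real.pi * besselJ ℓ₂ (lam * ρ₂) * besselJ (ℓ₁ + ℓ₂) (lam * ρ₃) := by
  set a : ℤ → ℝ := fun m => besselJ m (lam * ρ₂) * besselJ (m + ℓ₁) (lam * ρ₃) with ha
  set F : ℤ → ℝ → ℝ := fun m γ => a m * Real.cos (((m : ℝ) - (ℓ₂ : ℝ)) * γ) with hF
  have hpi2 : (Real.pi / 2) ∈ Set.Ioo (0:ℝ) Real.pi :=
    ⟨by positivity, by linarith [Real.pi_pos]⟩
  -- summability of |a|
  have hsum : Summable fun m : ℤ => |a m| := by
    have h := summable_norm_iff.mpr (hGraf _ hpi2 ℓ₁).summable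
    refine h.congr fun m => ?_
    simp [ha, Complex.norm_exp, abs_mul, Complex.mul_re, Complex.mul_im]
  -- pointwise HasSum for the real integrand
  have hpt : ∀ γ ∈ Set.Ioo (0:ℝ) Real.pi,
      HasSum (fun m => F m γ)
        (Real.cos (ℓ₁ * γ₁ γ - ℓ₂ * γ) * besselJ ℓ₁ (lam * ρ₁ γ)) := by
    intro γ hγ
    have h := (hGraf γ hγ ℓ₁).mul_right (Complex.exp (-(Complex.I * ℓ₂ * γ)))
    have h2 := h.mapL Complex.reCLM
    have e1 : ∀ m : ℤ,
        Complex.reCLM ((besselJ m (lam * ρ₂) : ℂ) * (besselJ (m + ℓ₁) (lam * ρ₃) : ℂ) *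
          Complex.exp (Complex.I * m * γ) * Complex.exp (-(Complex.I * ℓ₂ * γ))) = F m γ := by
      intro m
      have : ((besselJ m (lam * ρ₂) : ℂ) * (besselJ (m + ℓ₁) (lam * ρ₃) : ℂ) *
          Complex.exp (Complex.I * m * γ) * Complex.exp (-(Complex.I * ℓ₂ * γ))) =
          ((a m : ℂ)) * Complex.exp ((((m : ℝ) - (ℓ₂ : ℝ)) * γ : ℝ) * Complex.I) := by
        rw [mul_assoc, ← Complex.exp_add]
        congr 1
        · push_cast [ha]; ring
        · push_cast; ring
      rw [this, Complex.reCLM_apply]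
      exact re_aux _ _
    have e2 : Complex.reCLM (Complex.exp (Complex.I * ℓ₁ * γ₁ γ) *
        (besselJ ℓ₁ (lam * ρ₁ γ) : ℂ) * Complex.exp (-(Complex.I * ℓ₂ * γ))) =
        Real.cos (ℓ₁ * γ₁ γ - ℓ₂ * γ) * besselJ ℓ₁ (lam * ρ₁ γ) := by
      have : (Complex.exp (Complex.I * ℓ₁ * γ₁ γ) * (besselJ ℓ₁ (lam * ρ₁ γ) : ℂ) *
          Complex.exp (-(Complex.I * ℓ₂ * γ))) =
          ((besselJ ℓ₁ (lam * ρ₁ γ) : ℂ)) *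
            Complex.exp (((ℓ₁ : ℝ) * γ₁ γ - (ℓ₂ : ℝ) * γ : ℝ) * Complex.I) := by
        rw [mul_comm (Complex.exp (Complex.I * ℓ₁ * γ₁ γ)), mul_assoc, ← Complex.exp_add]
        congr 1
        push_cast; ring
      rw [this, Complex.reCLM_apply, re_aux, mul_comm]
    rw [← e2]
    exact h2.congr_fun fun m => (e1 m).symm
  -- swap sum and integral
  have hswap : HasSum (fun m => ∫ γ in (0:ℝ)..Real.pi, F m γ)
      (∫ γ in (0:ℝ)..Real.pi, Real.cos (ℓ₁ * γ₁ γ - ℓ₂ * γ) * besselJ ℓ₁ (lam * ρ₁ γ)) := by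
    apply intervalIntegral.hasSum_integral_of_dominated_convergence
      (bound := fun m (_ : ℝ) => |a m|)
    · intro m
      exact (continuous_const.mul (Real.continuous_cos.comp (continuous_const.mul continuous_id))).aestronglyMeasurable
    · intro m
      filter_upwards with t _
      calc ‖F m t‖ = |a m| * |Real.cos (((m:ℝ) - (ℓ₂:ℝ)) * t)| := abs_mul _ _
        _ ≤ |a m| * 1 := by
            gcongr
            exact Real.abs_cos_le_one _
        _ = |a m| := mul_one _
    · filter_upwards with t _
      exact hsum
    · exact intervalIntegrable_const
    · have hne : ∀ᵐ t : ℝ, t ≠ Real.pi := by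
        rw [MeasureTheory.ae_iff]
        simpa using Real.volume_singleton
      filter_upwards [hne] with t ht htI
      have htIoo : t ∈ Set.Ioo (0:ℝ) Real.pi := by
        rw [Set.uIoc_of_le Real.pi_pos.le] at htI
        exact ⟨htI.1, lt_of_le_of_ne htI.2 ht⟩
      exact hpt t htIoo
  -- compute each integral
  have hint : ∀ m : ℤ, (∫ γ in (0:ℝ)..Real.pi, F m γ) =
      if m = ℓ₂ then Real.pi * a ℓ₂ else 0 := by
    intro m
    by_cases hm : m = ℓ₂
    · subst hm
      simp only [hF, sub_self, zero_mul, Real.cos_zero, mul_one, if_true]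
      rw [intervalIntegral.integral_const]
      simp [mul_comm]
    · rw [if_neg hm]
      have hk : ((m : ℝ) - (ℓ₂ : ℝ)) ≠ 0 := by
        intro h
        apply hm
        exact_mod_cast sub_eq_zero.mp h
      simp only [hF]
      rw [intervalIntegral.integral_const_mul,
        intervalIntegral.integral_comp_mul_left Real.cos hk]
      have : Real.sin (((m : ℝ) - (ℓ₂ : ℝ)) * Real.pi) = 0 := by
        have := Real.sin_int_mul_pi (m - ℓ₂)
        push_cast at this ⊢
        exact this
      simp [integral_cos, this]
  have hsingle : HasSum (fun m : ℤ => if m = ℓ₂ then Real.pi * a ℓ₂ else 0)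
      (Real.pi * a ℓ₂) := hasSum_ite_eq ℓ₂ _
  have := (hswap.congr_fun fun m => (hint m).symm).unique hsingle
  rw [this, ha]
  simp only [add_comm ℓ₂ ℓ₁]
  ring
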